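/- Let F be real n×n with F + Fᵀ ⪰ 0, and let Π be diagonal with 0/1 entries such that F + (I − Π) is invertible (CC case: γ₁=0, γ₂=1). Then every eigenvalue λ of the generalized problem (FFᵀ + (I−Π))y = λ(F + (I−Π))(F + (I−Π))ᵀ y satisfies λ ≥ 1/2. -/

import Mathlib

open Matrix

theorem stmt18 {n : ℕ} (F : Matrix (Fin n) (Fin n) ℝ) (d : Fin n → ℝ)
    (hF : (F + Fᵀ).PosSemidef) (hd : ∀ i, d i = 0 ∨ d i = 1)
    (hinv : IsUnit (F + (1 - diagonal d))) :
    ∀ (lam : ℝ) (y : Fin n → ℝ), y ≠ 0 →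
      (F * Fᵀ + (1 - diagonal d)).mulVec y
        = lam • ((F + (1 - diagonal d)) * (F + (1 - diagonal d))ᵀ).mulVec y →
      1 / 2 ≤ lam := by
  intro lam y hy hEq
  set E : Matrix (Fin n) (Fin n) ℝ := 1 - diagonal d with hE
  have hEsymm : Eᵀ = E := by
    simp [hE, transpose_sub]
  have hdd : diagonal d * diagonal d = diagonal d := by
    ext i j
    by_cases hij : i = j
    · subst hij
      rcases hd i with h | h <;> simp [diagonal_mul_diagonal, h]
    · simp [diagonal_mul_diagonal, diagonal_apply_ne _ hij]
  have hEE : E * E = E := by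
    have : E * E = 1 - diagonal d - diagonal d + diagonal d * diagonal d := by
      rw [hE]; noncomm_ring
    rw [this, hdd, hE]; abel
  -- key matrix identity: 2(FFᵀ + E) = (F+E)(F+E)ᵀ + (F−E)(F−E)ᵀ
  have key : (F * Fᵀ + E) + (F * Fᵀ + E)
      = (F + E) * (F + E)ᵀ + (F - E) * (F - E)ᵀ := by
    have hT1 : (F + E)ᵀ = Fᵀ + E := by rw [transpose_add, hEsymm]
    have hT2 : (F - E)ᵀ = Fᵀ - E := by rw [transpose_sub, hEsymm]
    rw [hT1, hT2]
    have expand : (F + E) * (Fᵀ + E) + (F - E) * (Fᵀ - E)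
        = (F * Fᵀ + E * E) + (F * Fᵀ + E * E) := by noncomm_ring
    rw [expand, hEE]
  -- quadratic forms
  set G : Matrix (Fin n) (Fin n) ℝ := F + E with hG
  have hGt : IsUnit Gᵀ := (Matrix.isUnit_transpose G).mpr hinv
  have hz : Gᵀ.mulVec y ≠ 0 := by
    intro h
    exact hy ((Matrix.mulVec_injective_iff_isUnit.mpr hGt) (by simpa using h))
  have ht : 0 < y ⬝ᵥ (G * Gᵀ).mulVec y := by
    have : y ⬝ᵥ (G * Gᵀ).mulVec y = (Gᵀ.mulVec y) ⬝ᵥ (Gᵀ.mulVec y) := by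
      rw [← mulVec_mulVec, dotProduct_mulVec, ← mulVec_transpose]
    rw [this]
    have := dotProduct_star_self_pos_iff (v := Gᵀ.mulVec y) (R := ℝ)
    simpa [star_trivial] using this.mpr hz
  have hp : 0 ≤ y ⬝ᵥ ((F - E) * (F - E)ᵀ).mulVec y := by
    have hps := posSemidef_self_mul_conjTranspose (F - E)
    have := hps.dotProduct_mulVec_nonneg y
    simpa [star_trivial, conjTranspose_eq_transpose_of_trivial] using this
  have h1 : y ⬝ᵥ (F * Fᵀ + E).mulVec y = lam * (y ⬝ᵥ (G * Gᵀ).mulVec y) := by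
    rw [hEq]
    simp [hG, dotProduct_smul, smul_eq_mul]
  have h2 : y ⬝ᵥ ((F * Fᵀ + E) + (F * Fᵀ + E)).mulVec y
      = y ⬝ᵥ ((G * Gᵀ) + (F - E) * (F - E)ᵀ).mulVec y := by rw [key]
  simp only [add_mulVec, dotProduct_add] at h1 h2
  nlinarith [ht, hp, h1, h2]
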